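/- arXiv:1403.1850 — 4 statements merged into one kernel-verified Lean document; each statement's English description precedes it below -/
import Mathlib

section
/- For n ≥ 2, the sum of the solid angles at the vertices of a nondegenerate n-simplex in ℝⁿ is at most half the (n−1)-dimensional volume of the unit sphere S^{n−1}. -/
open MeasureTheory

/-- The solid angle cone at the vertex `v i` of the simplex with vertices
`v 0, …, v n`: the convex cone based at `v i` spanned by the edges incident to
`v i`. -/
def vertexCone {n : ℕ} (v : Fin (n + 1) → EuclideanSpace ℝ (Fin n))
    (i : Fin (n + 1)) : Set (EuclideanSpace ℝ (Fin n)) :=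
  {p | ∃ a : Fin (n + 1) → ℝ, (∀ j, 0 ≤ a j) ∧
    p = v i + ∑ j ∈ Finset.univ.erase i, a j • (v j - v i)}

/-- The solid angle of the simplex with vertices `v` at the vertex `v i`: the
`(n-1)`-dimensional Hausdorff measure of the intersection of the unit sphere
centered at `v i` with the cone at `v i`. -/
noncomputable def solidAngle {n : ℕ} (v : Fin (n + 1) → EuclideanSpace ℝ (Fin n))
    (i : Fin (n + 1)) : ENNReal :=
  μH[(n : ℝ) - 1] (Metric.sphere (v i) 1 ∩ vertexCone v i)

namespace SolidAngleAux

variable {n : ℕ}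

/-- The cone at vertex `i`, translated to the origin. -/
def K (v : Fin (n + 1) → EuclideanSpace ℝ (Fin n)) (i : Fin (n + 1)) :
    Set (EuclideanSpace ℝ (Fin n)) :=
  {u | ∃ a : Fin (n + 1) → ℝ, (∀ j, 0 ≤ a j) ∧
    u = ∑ j ∈ Finset.univ.erase i, a j • (v j - v i)}

lemma vertexCone_eq (v : Fin (n + 1) → EuclideanSpace ℝ (Fin n)) (i : Fin (n + 1)) :
    vertexCone v i = (fun u => u +ᵥ v i) '' K v i := by
  ext p
  constructor
  · rintro ⟨a, ha, rfl⟩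
    exact ⟨_, ⟨a, ha, rfl⟩, add_comm _ _⟩
  · rintro ⟨u, ⟨a, ha, rfl⟩, rfl⟩
    exact ⟨a, ha, add_comm _ _⟩

end SolidAngleAux

open SolidAngleAux in
/-- for `n ≥ 2`, the sum of the solid angles of a nondegenerate
`n`-simplex in `ℝⁿ` is at most half the `(n-1)`-dimensional volume of the unit
sphere `S^{n-1}`. -/
theorem sum_solidAngle_le {n : ℕ} (hn : 2 ≤ n)
    (v : Fin (n + 1) → EuclideanSpace ℝ (Fin n))
    (hv : AffineIndependent ℝ v) :
    ∑ i, solidAngle v i ≤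
      2⁻¹ * μH[(n : ℝ) - 1] (Metric.sphere (0 : EuclideanSpace ℝ (Fin n)) 1) := by
  classical
  set d : ℝ := (n : ℝ) - 1 with hd
  have hd0 : 0 < d := by
    have : (2 : ℝ) ≤ (n : ℝ) := by exact_mod_cast hn
    rw [hd]; linarith
  haveI : NullSingletonClass (μH[d] : Measure (EuclideanSpace ℝ (Fin n))) := Measure.nullSingletonClass_hausdorff (EuclideanSpace ℝ (Fin n)) hd0
  -- the affine basis given by the vertices
  have htot : affineSpan ℝ (Set.range v) = ⊤ := by
    rw [hv.affineSpan_eq_top_iff_card_eq_finrank_add_one]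
    simp [finrank_euclideanSpace_fin]
  let b : AffineBasis (Fin (n + 1)) ℝ (EuclideanSpace ℝ (Fin n)) := ⟨v, hv, htot⟩
  have hbv : ∀ j, b j = v j := fun j => rfl
  -- barycentric coordinate linear functionals
  set β : Fin (n + 1) → EuclideanSpace ℝ (Fin n) →ₗ[ℝ] ℝ := fun j => (b.coord j).linear with hβdef
  have hβ' : ∀ j (u : EuclideanSpace ℝ (Fin n)), β j u = b.coord j u - b.coord j 0 := by
    intro j u
    have h := (b.coord j).map_vadd (0 : EuclideanSpace ℝ (Fin n)) u
    rw [vadd_eq_add, add_zero, vadd_eq_add] at h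
    rw [h]; ring
  have hβsum : ∀ u : EuclideanSpace ℝ (Fin n), ∑ j, β j u = 0 := by
    intro u
    simp only [hβ', Finset.sum_sub_distrib, b.sum_coord_apply_eq_one, sub_self]
  have hrepr : ∀ u : EuclideanSpace ℝ (Fin n), ∑ j, β j u • v j = u := by
    intro u
    have h1 : ∑ j, b.coord j u • v j = u := b.linear_combination_coord_eq_self u
    have h2 : ∑ j, b.coord j (0 : EuclideanSpace ℝ (Fin n)) • v j = (0 : EuclideanSpace ℝ (Fin n)) := b.linear_combination_coord_eq_self 0
    calc ∑ j, β j u • v j = ∑ j, (b.coord j u • v j - b.coord j 0 • v j) := by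
          simp only [hβ', sub_smul]
      _ = u := by rw [Finset.sum_sub_distrib, h1, h2, sub_zero]
  have hβv : ∀ k i j : Fin (n + 1), β k (v j - v i)
      = (if k = j then (1:ℝ) else 0) - (if k = i then (1:ℝ) else 0) := by
    intro k i j
    have h : (b.coord k).linear (v j -ᵥ v i) = b.coord k (v j) -ᵥ b.coord k (v i) :=
      (b.coord k).linearMap_vsub (v j) (v i)
    rw [show (v j - v i : EuclideanSpace ℝ (Fin n)) = v j -ᵥ v i from rfl]
    rw [hβdef]
    rw [h, ← hbv i, ← hbv j, b.coord_apply, b.coord_apply, vsub_eq_sub]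
  -- expansion of a vector in the edge directions at vertex i
  have hexp : ∀ (i : Fin (n + 1)) (u : EuclideanSpace ℝ (Fin n)),
      ∑ j ∈ Finset.univ.erase i, β j u • (v j - v i) = u := by
    intro i u
    have hsum_erase : ∑ j ∈ Finset.univ.erase i, β j u = -β i u := by
      have h := Finset.sum_erase_add Finset.univ (fun j => β j u) (Finset.mem_univ i)
      rw [hβsum u] at h
      linarith
    have hveq : ∑ j ∈ Finset.univ.erase i, β j u • v j = u - β i u • v i := by
      have h := Finset.sum_erase_add Finset.univ (fun j => β j u • v j) (Finset.mem_univ i)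
      rw [hrepr u] at h
      exact eq_sub_of_add_eq h
    calc ∑ j ∈ Finset.univ.erase i, β j u • (v j - v i)
        = ∑ j ∈ Finset.univ.erase i, (β j u • v j - β j u • v i) := by
          simp only [smul_sub]
      _ = (∑ j ∈ Finset.univ.erase i, β j u • v j)
            - (∑ j ∈ Finset.univ.erase i, β j u) • v i := by
          rw [Finset.sum_sub_distrib, Finset.sum_smul]
      _ = (u - β i u • v i) - (-β i u) • v i := by rw [hveq, hsum_erase]
      _ = u := by rw [neg_smul]; abel
  -- membership criterion
  have hmem : ∀ (i : Fin (n + 1)) (u : EuclideanSpace ℝ (Fin n)), u ∈ K v i ↔ ∀ j, j ≠ i → 0 ≤ β j u := by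
    intro i u
    constructor
    · rintro ⟨a, ha, rfl⟩ k hk
      have h : β k (∑ j ∈ Finset.univ.erase i, a j • (v j - v i))
          = ∑ j ∈ Finset.univ.erase i, a j * β k (v j - v i) := by
        rw [map_sum]
        exact Finset.sum_congr rfl fun j _ => by rw [LinearMap.map_smul, smul_eq_mul]
      rw [h]
      have hterm : ∀ j ∈ Finset.univ.erase i,
          a j * β k (v j - v i) = if k = j then a j else 0 := by
        intro j hj
        rw [hβv, if_neg hk, sub_zero]
        by_cases hkj : k = j <;> simp [hkj]
      rw [Finset.sum_congr rfl hterm, Finset.sum_ite_eq,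
        if_pos (Finset.mem_erase.mpr ⟨hk, Finset.mem_univ k⟩)]
      exact ha k
    · intro h
      refine ⟨fun j => if j = i then 0 else β j u, ?_, ?_⟩
      · intro j
        by_cases hj : j = i
        · simp [hj]
        · simpa [hj] using h j hj
      · have hc : ∑ j ∈ Finset.univ.erase i, (if j = i then 0 else (β j) u) • (v j - v i)
            = ∑ j ∈ Finset.univ.erase i, (β j) u • (v j - v i) :=
          Finset.sum_congr rfl fun j hj => by rw [if_neg (Finset.ne_of_mem_erase hj)]
        rw [hc]
        exact (hexp i u).symm
  -- if all coordinates vanish except possibly at i, the vector is zero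
  have hzero : ∀ (i : Fin (n + 1)) (u : EuclideanSpace ℝ (Fin n)), (∀ j, j ≠ i → β j u = 0) → u = 0 := by
    intro i u h
    rw [← hexp i u]
    refine Finset.sum_eq_zero fun j hj => ?_
    rw [h j (Finset.ne_of_mem_erase hj), zero_smul]
  -- key geometric facts
  have hKK : ∀ i j : Fin (n + 1), i ≠ j → ∀ u : EuclideanSpace ℝ (Fin n), u ∈ K v i → u ∈ K v j → u = 0 := by
    intro i j hij u hi hj
    have hall : ∀ k, 0 ≤ β k u := by
      intro k
      rcases eq_or_ne k i with rfl | hk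
      · exact (hmem j u).mp hj k hij
      · exact (hmem i u).mp hi k hk
    have heach := (Finset.sum_eq_zero_iff_of_nonneg fun k _ => hall k).mp (hβsum u)
    exact hzero i u fun k _ => heach k (Finset.mem_univ k)
  have hKnegK : ∀ i j : Fin (n + 1), i ≠ j → ∀ u : EuclideanSpace ℝ (Fin n), u ∈ K v i → -u ∈ K v j →
      ∃ t : ℝ, 0 ≤ t ∧ u = t • (v j - v i) := by
    intro i j hij u hi hj
    have h1 : ∀ k, k ≠ i → 0 ≤ β k u := (hmem i u).mp hi
    have h2 : ∀ k, k ≠ j → β k u ≤ 0 := by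
      intro k hk
      have h := (hmem j (-u)).mp hj k hk
      rw [map_neg] at h
      linarith
    have h3 : ∀ k, k ≠ i → k ≠ j → β k u = 0 := fun k hki hkj =>
      le_antisymm (h2 k hkj) (h1 k hki)
    refine ⟨β j u, h1 j (fun h => hij h.symm), ?_⟩
    have hs : ∑ k ∈ Finset.univ.erase i, (β k) u • (v k - v i) = (β j) u • (v j - v i) := by
      rw [Finset.sum_eq_single_of_mem j
        (Finset.mem_erase.mpr ⟨fun h => hij h.symm, Finset.mem_univ j⟩)]
      intro k hk hkj
      rw [h3 k (Finset.ne_of_mem_erase hk) hkj, zero_smul]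
    rw [← hs]
    exact (hexp i u).symm
  have hKnegKself : ∀ (i : Fin (n + 1)) (u : EuclideanSpace ℝ (Fin n)), u ∈ K v i → -u ∈ K v i → u = 0 := by
    intro i u hi hni
    refine hzero i u fun k hk => ?_
    have h1 := (hmem i u).mp hi k hk
    have h2 := (hmem i (-u)).mp hni k hk
    rw [map_neg] at h2
    linarith
  -- K v i is closed
  have hKclosed : ∀ i, IsClosed (K v i) := by
    intro i
    have h : K v i = ⋂ j ∈ {j | j ≠ i}, (β j) ⁻¹' Set.Ici 0 := by
      ext u
      simp only [Set.mem_iInter, Set.mem_preimage, Set.mem_Ici, Set.mem_setOf_eq]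
      exact hmem i u
    rw [h]
    exact isClosed_biInter fun j _ =>
      IsClosed.preimage (β j).continuous_of_finiteDimensional isClosed_Ici
  set S : Set (EuclideanSpace ℝ (Fin n)) := Metric.sphere (0 : EuclideanSpace ℝ (Fin n)) 1 with hS
  have hnorm1 : ∀ u : EuclideanSpace ℝ (Fin n), u ∈ S → ‖u‖ = 1 := by
    intro u hu
    rw [hS] at hu
    exact mem_sphere_zero_iff_norm.mp hu
  -- vertices are distinct
  have hvne : ∀ i j : Fin (n + 1), i ≠ j → (v j - v i : EuclideanSpace ℝ (Fin n)) ≠ 0 := by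
    intro i j hij h
    rw [sub_eq_zero] at h
    exact hij (hv.injective h).symm
  -- uniqueness of sphere points on a ray
  have hray : ∀ w : EuclideanSpace ℝ (Fin n), w ≠ 0 → ∀ u₁ u₂ : EuclideanSpace ℝ (Fin n), u₁ ∈ S → u₂ ∈ S →
      (∃ t : ℝ, 0 ≤ t ∧ u₁ = t • w) → (∃ t : ℝ, 0 ≤ t ∧ u₂ = t • w) → u₁ = u₂ := by
    rintro w hw u₁ u₂ h1 h2 ⟨t₁, ht₁, rfl⟩ ⟨t₂, ht₂, rfl⟩
    have e1 : t₁ * ‖w‖ = 1 := by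
      have h := hnorm1 _ h1; rwa [norm_smul, Real.norm_of_nonneg ht₁] at h
    have e2 : t₂ * ‖w‖ = 1 := by
      have h := hnorm1 _ h2; rwa [norm_smul, Real.norm_of_nonneg ht₂] at h
    have hwn : ‖w‖ ≠ 0 := norm_ne_zero_iff.mpr hw
    have : t₁ = t₂ := mul_right_cancel₀ hwn (e1.trans e2.symm)
    rw [this]
  -- the 2(n+1) pieces of the sphere
  set f : Fin (n + 1) × Bool → Set (EuclideanSpace ℝ (Fin n)) :=
    fun p => S ∩ (if p.2 then K v p.1 else (fun u : EuclideanSpace ℝ (Fin n) => -u) ⁻¹' K v p.1) with hf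
  have hfS : ∀ p, f p ⊆ S := fun p => Set.inter_subset_left
  have hfm : ∀ p, NullMeasurableSet (f p) (μH[d] : Measure (EuclideanSpace ℝ (Fin n))) := by
    rintro ⟨i, bi⟩
    refine MeasurableSet.nullMeasurableSet ?_
    refine (Metric.isClosed_sphere.inter ?_).measurableSet
    cases bi
    · simp only [hf, if_false, Bool.false_eq_true]
      exact IsClosed.preimage continuous_neg (hKclosed i)
    · simp only [hf, if_true]
      exact hKclosed i
  -- pairwise almost disjoint
  have hdisj : (↑(Finset.univ : Finset (Fin (n + 1) × Bool)) : Set _).Pairwise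
      (Function.onFun (AEDisjoint (μH[d] : Measure (EuclideanSpace ℝ (Fin n)))) f) := by
    intro p _ q _ hpq
    have hsub : (f p ∩ f q).Subsingleton := by
      rcases p with ⟨i, bi⟩
      rcases q with ⟨j, bj⟩
      intro u₁ hu₁ u₂ hu₂
      obtain ⟨⟨hu₁S, hu₁i⟩, _, hu₁j⟩ := hu₁
      obtain ⟨⟨hu₂S, hu₂i⟩, _, hu₂j⟩ := hu₂
      have hn1 : u₁ ≠ 0 := by
        intro h0
        have := hnorm1 u₁ hu₁S
        rw [h0, norm_zero] at this
        norm_num at this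
      have hnn1 : -u₁ ≠ 0 := by simpa using hn1
      cases bi <;> cases bj <;>
        simp only [if_true, if_false, Bool.false_eq_true, Set.mem_preimage] at hu₁i hu₁j hu₂i hu₂j
      · -- both negative cones
        have hij : i ≠ j := by
          intro h; exact hpq (by rw [h])
        exact absurd (neg_eq_zero.mp (hKK i j hij _ hu₁i hu₁j)) hn1
      · -- -K i and K j
        rcases eq_or_ne i j with rfl | hij
        · exact absurd (hKnegKself i u₁ hu₁j (by simpa using hu₁i)) hn1
        · have r1 := hKnegK j i (Ne.symm hij) u₁ hu₁j (by simpa using hu₁i)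
          have r2 := hKnegK j i (Ne.symm hij) u₂ hu₂j (by simpa using hu₂i)
          exact hray _ (hvne j i (Ne.symm hij)) u₁ u₂ hu₁S hu₂S r1 r2
      · -- K i and -K j
        rcases eq_or_ne i j with rfl | hij
        · exact absurd (hKnegKself i u₁ hu₁i hu₁j) hn1
        · have r1 := hKnegK i j hij u₁ hu₁i hu₁j
          have r2 := hKnegK i j hij u₂ hu₂i hu₂j
          exact hray _ (hvne i j hij) u₁ u₂ hu₁S hu₂S r1 r2
      · -- both positive cones
        have hij : i ≠ j := by
          intro h; exact hpq (by rw [h])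
        exact absurd (hKK i j hij u₁ hu₁i hu₁j) hn1
    exact hsub.measure_zero _
  have hsum_le : ∑ p : Fin (n + 1) × Bool, μH[d] (f p) ≤ μH[d] S := by
    rw [← measure_biUnion_finset₀ hdisj fun p _ => hfm p]
    exact measure_mono (Set.iUnion₂_subset fun p _ => hfS p)
  -- identify the measures of the pieces with the solid angles
  have hμK : ∀ i, μH[d] (S ∩ K v i) = solidAngle v i := by
    intro i
    unfold solidAngle
    rw [← hd]
    have himg : (IsometryEquiv.vaddConst (v i) : EuclideanSpace ℝ (Fin n) ≃ᵢ EuclideanSpace ℝ (Fin n)) '' (S ∩ K v i)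
        = Metric.sphere (v i) 1 ∩ vertexCone v i := by
      rw [Set.image_inter (IsometryEquiv.vaddConst (v i)).injective, vertexCone_eq]
      congr 1
      · rw [hS, IsometryEquiv.image_sphere]
        simp
    rw [← himg, IsometryEquiv.hausdorffMeasure_image]
  have hμnegK : ∀ i, μH[d] (S ∩ (fun u : EuclideanSpace ℝ (Fin n) => -u) ⁻¹' K v i) = solidAngle v i := by
    intro i
    rw [← hμK i]
    set e : EuclideanSpace ℝ (Fin n) ≃ᵢ EuclideanSpace ℝ (Fin n) := ((LinearIsometryEquiv.neg ℝ : EuclideanSpace ℝ (Fin n) ≃ₗᵢ[ℝ] EuclideanSpace ℝ (Fin n))).toIsometryEquiv with he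
    have himg : e '' (S ∩ K v i) = S ∩ (fun u : EuclideanSpace ℝ (Fin n) => -u) ⁻¹' K v i := by
      rw [Set.image_inter e.injective]
      congr 1
      · rw [hS, IsometryEquiv.image_sphere]
        have h0 : e (0 : EuclideanSpace ℝ (Fin n)) = 0 := by simp [he]
        rw [h0]
      · ext u
        simp only [Set.mem_image, Set.mem_preimage]
        constructor
        · rintro ⟨w, hw, rfl⟩
          have : e w = -w := rfl
          rw [this]
          simpa using hw
        · intro hu
          exact ⟨-u, hu, by simp [he]⟩
    rw [← himg, IsometryEquiv.hausdorffMeasure_image]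
  -- assemble
  have htwo : ∑ p : Fin (n + 1) × Bool, μH[d] (f p) = 2 * ∑ i, solidAngle v i := by
    rw [Fintype.sum_prod_type]
    have hrow : ∀ i : Fin (n + 1), ∑ bb : Bool, μH[d] (f (i, bb)) = 2 * solidAngle v i := by
      intro i
      rw [Fintype.sum_bool]
      simp only [hf, if_true, if_false, Bool.false_eq_true]
      rw [hμK i, hμnegK i, two_mul]
    rw [Finset.sum_congr rfl fun i _ => hrow i, ← Finset.mul_sum]
  rw [htwo] at hsum_le
  calc ∑ i, solidAngle v i = 2⁻¹ * (2 * ∑ i, solidAngle v i) := by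
        rw [← mul_assoc, ENNReal.inv_mul_cancel two_ne_zero ENNReal.ofNat_ne_top, one_mul]
    _ ≤ 2⁻¹ * μH[d] S := mul_le_mul_right hsum_le _
end

section
/- With A the symmetric matrix whose columns form a regular unit n-simplex (diagonal μ, off-diagonal ν as above) and B_i the basepoint-change matrices, for each i there exists an orthogonal matrix Q_i ∈ O(n) such that A·B_i = Q_i·A. -/
open Matrix

/-- The symmetric matrix whose columns, together with the origin, form a
regular `n`-simplex with unit edge lengths. -/
noncomputable def regularSimplexMatrix (n : ℕ) : Matrix (Fin n) (Fin n) ℝ :=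
  fun i j =>
    if i = j then (n + Real.sqrt (n + 1) - 1) / (Real.sqrt 2 * n)
    else (Real.sqrt (n + 1) - 1) / (Real.sqrt 2 * n)

/-- The basepoint-change matrix `B i`: the identity matrix with the `i`-th row
replaced by `(-1, -1, …, -1)`. -/
def basepointChange (n : ℕ) (i : Fin n) : Matrix (Fin n) (Fin n) ℝ :=
  fun k l => if k = i then -1 else if k = l then 1 else 0

/-- Auxiliary: the all-ones matrix. -/
def auxJmat (n : ℕ) : Matrix (Fin n) (Fin n) ℝ := fun _ _ => 1

/-- Auxiliary: the matrix with a single 1 in position `(i, i)`. -/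
def auxEmat (n : ℕ) (i : Fin n) : Matrix (Fin n) (Fin n) ℝ :=
  fun k l => if k = i ∧ l = i then 1 else 0

lemma auxJJ (n : ℕ) : auxJmat n * auxJmat n = (n : ℝ) • auxJmat n := by
  ext k l; simp [auxJmat, mul_apply]

lemma auxEE (n : ℕ) (i : Fin n) : auxEmat n i * auxEmat n i = auxEmat n i := by
  ext k l; simp [auxEmat, mul_apply, ite_and]; split_ifs <;> simp_all

lemma auxEJE (n : ℕ) (i : Fin n) :
    auxEmat n i * auxJmat n * auxEmat n i = auxEmat n i := by
  ext k l; simp [auxEmat, auxJmat, mul_apply, ite_and]; split_ifs <;> simp_all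

lemma auxJsymm (n : ℕ) : (auxJmat n)ᵀ = auxJmat n := by ext k l; simp [auxJmat]

lemma auxEsymm (n : ℕ) (i : Fin n) : (auxEmat n i)ᵀ = auxEmat n i := by
  ext k l; simp [auxEmat, and_comm]

lemma auxBdecomp (n : ℕ) (i : Fin n) :
    basepointChange n i = 1 - auxEmat n i * (1 + auxJmat n) := by
  ext k l
  simp only [basepointChange, Matrix.sub_apply, Matrix.add_apply, mul_apply, auxEmat, auxJmat,
    one_apply, ite_and]
  by_cases hk : k = i <;> by_cases hl : k = l <;> simp_all [Finset.sum_ite_eq]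

lemma auxEKE (n : ℕ) (i : Fin n) :
    auxEmat n i * (1 + auxJmat n) * auxEmat n i = auxEmat n i + auxEmat n i := by
  rw [mul_add, mul_one, add_mul, auxEE, auxEJE]

lemma auxBB (n : ℕ) (i : Fin n) :
    basepointChange n i * basepointChange n i = 1 := by
  rw [auxBdecomp]
  set E := auxEmat n i
  set K := (1 : Matrix (Fin n) (Fin n) ℝ) + auxJmat n
  have hXX : (E * K) * (E * K) = E * K + E * K := by
    have : (E * K) * (E * K) = (E * K * E) * K := by noncomm_ring
    rw [this, auxEKE, add_mul]
  have expand : (1 - E * K) * (1 - E * K)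
      = 1 - E * K - E * K + (E * K) * (E * K) := by noncomm_ring
  rw [expand, hXX]; abel

lemma auxBtranspose (n : ℕ) (i : Fin n) :
    (basepointChange n i)ᵀ = 1 - (1 + auxJmat n) * auxEmat n i := by
  rw [auxBdecomp, transpose_sub, transpose_one, transpose_mul, transpose_add,
    transpose_one, auxJsymm, auxEsymm]

lemma auxKey (n : ℕ) (i : Fin n) :
    (basepointChange n i)ᵀ * (1 + auxJmat n) * basepointChange n i
      = 1 + auxJmat n := by
  rw [auxBtranspose, auxBdecomp]
  set E := auxEmat n i
  set K := (1 : Matrix (Fin n) (Fin n) ℝ) + auxJmat n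
  have hEKE : E * K * E = E + E := auxEKE n i
  have expand : (1 - K * E) * K * (1 - E * K)
      = K - K * E * K - K * E * K + K * ((E * K * E) * K) := by noncomm_ring
  rw [expand, hEKE]
  noncomm_ring

lemma auxAdecomp (n : ℕ) (hn : 0 < n) :
    regularSimplexMatrix n =
      (1 / Real.sqrt 2) • (1 : Matrix (Fin n) (Fin n) ℝ) +
        ((Real.sqrt (n + 1) - 1) / (Real.sqrt 2 * n)) • auxJmat n := by
  have ht : Real.sqrt 2 ≠ 0 := by positivity
  have hn' : (n : ℝ) ≠ 0 := Nat.cast_ne_zero.mpr hn.ne'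
  ext k l
  simp only [regularSimplexMatrix, Matrix.add_apply, Matrix.smul_apply, one_apply, auxJmat,
    smul_eq_mul]
  by_cases h : k = l <;> simp [h] <;> field_simp <;> ring

lemma auxAsymm (n : ℕ) : (regularSimplexMatrix n)ᵀ = regularSimplexMatrix n := by
  ext k l
  simp only [regularSimplexMatrix, transpose_apply]
  by_cases h : k = l <;> simp [h, eq_comm]

lemma auxAAgen (n : ℕ) (hn : 0 < n) (s t : ℝ) (hs : s * s = (n : ℝ) + 1)
    (ht : t * t = 2) (ht0 : t ≠ 0) :
    ((1 / t) • (1 : Matrix (Fin n) (Fin n) ℝ) + ((s - 1) / (t * n)) • auxJmat n) *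
      ((1 / t) • (1 : Matrix (Fin n) (Fin n) ℝ) + ((s - 1) / (t * n)) • auxJmat n)
      = (1 / 2 : ℝ) • (1 + auxJmat n) := by
  have hn' : (n : ℝ) ≠ 0 := Nat.cast_ne_zero.mpr hn.ne'
  rw [add_mul, mul_add, mul_add, smul_mul_smul_comm, smul_mul_smul_comm,
    smul_mul_smul_comm, smul_mul_smul_comm]
  simp only [one_mul, mul_one]
  rw [auxJJ, smul_smul, smul_add]
  match_scalars
  · field_simp
    linear_combination -ht
  · field_simp
    ring_nf
    linear_combination 2 * hs - (n : ℝ) * ht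

lemma auxAA (n : ℕ) (hn : 0 < n) :
    regularSimplexMatrix n * regularSimplexMatrix n =
      (1 / 2 : ℝ) • (1 + auxJmat n) := by
  rw [auxAdecomp n hn]
  exact auxAAgen n hn _ _ (Real.mul_self_sqrt (by positivity))
    (Real.mul_self_sqrt (by norm_num)) (by positivity)

lemma auxAinvertible (n : ℕ) (hn : 0 < n) :
    IsUnit (regularSimplexMatrix n).det := by
  have hne : ((n : ℝ) + 1) ≠ 0 := by positivity
  have hK : ((1 / 2 : ℝ) • ((1 : Matrix (Fin n) (Fin n) ℝ) + auxJmat n)) *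
      ((2 : ℝ) • ((1 : Matrix (Fin n) (Fin n) ℝ) - ((n : ℝ) + 1)⁻¹ • auxJmat n)) = 1 := by
    simp only [smul_mul_smul_comm, mul_sub, mul_add, add_mul, mul_one, one_mul,
      Matrix.mul_smul, Matrix.smul_mul, auxJJ, smul_smul]
    match_scalars <;> (field_simp; try ring)
  have hU : IsUnit ((regularSimplexMatrix n * regularSimplexMatrix n).det) := by
    rw [auxAA n hn]
    refine IsUnit.of_mul_eq_one (((2 : ℝ) • ((1 : Matrix (Fin n) (Fin n) ℝ) -
      ((n : ℝ) + 1)⁻¹ • auxJmat n)).det) ?_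
    rw [← Matrix.det_mul, hK, Matrix.det_one]
  rw [Matrix.det_mul] at hU
  exact isUnit_of_mul_isUnit_left hU

/-- changing the basepoint of the regular simplex is realized by
an orthogonal transformation: for each `i` there is `Q ∈ O(n)` with
`A · B i = Q · A`. -/
theorem regularSimplexMatrix_basepointChange_orthogonal (n : ℕ) (hn : 0 < n)
    (i : Fin n) :
    ∃ Q ∈ Matrix.orthogonalGroup (Fin n) ℝ,
      regularSimplexMatrix n * basepointChange n i = Q * regularSimplexMatrix n := by
  set A := regularSimplexMatrix n with hA
  set B := basepointChange n i with hBdef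
  have hdet : IsUnit A.det := auxAinvertible n hn
  have hAAinv : A * A⁻¹ = 1 := Matrix.mul_nonsing_inv A hdet
  have hAinvA : A⁻¹ * A = 1 := Matrix.nonsing_inv_mul A hdet
  -- key conjugation identity for A * A
  have hkeyAA : Bᵀ * (A * A) * B = A * A := by
    rw [auxAA n hn]
    have : Bᵀ * ((1 / 2 : ℝ) • (1 + auxJmat n)) * B
        = (1 / 2 : ℝ) • (Bᵀ * (1 + auxJmat n) * B) := by
      rw [mul_smul_comm, smul_mul_assoc]
    rw [this, auxKey n i]
  have hBB : B * B = 1 := auxBB n i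
  have hBinv : B⁻¹ = B := Matrix.inv_eq_right_inv hBB
  have hBtinv : (Bᵀ)⁻¹ = Bᵀ := by
    apply Matrix.inv_eq_right_inv
    rw [← transpose_mul, hBB, transpose_one]
  have hconj : B * (A⁻¹ * A⁻¹) * Bᵀ = A⁻¹ * A⁻¹ := by
    have h := congrArg (·⁻¹) hkeyAA
    simp only [Matrix.mul_inv_rev, hBinv, hBtinv] at h
    rw [Matrix.mul_assoc]
    exact h
  refine ⟨A * B * A⁻¹, ?_, ?_⟩
  · rw [Matrix.mem_orthogonalGroup_iff]
    have hstar : star (A * B * A⁻¹) = A⁻¹ * Bᵀ * A := by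
      have h1 : star (A * B * A⁻¹) = (A * B * A⁻¹)ᵀ := by
        ext k l
        simp [Matrix.star_eq_conjTranspose, Matrix.conjTranspose_apply]
      rw [h1, transpose_mul, transpose_mul, Matrix.transpose_nonsing_inv,
        auxAsymm, ← hA, Matrix.mul_assoc]
    rw [← conjTranspose_eq_transpose_of_trivial, ← star_eq_conjTranspose, hstar]
    calc A * B * A⁻¹ * (A⁻¹ * Bᵀ * A)
        = A * (B * (A⁻¹ * A⁻¹) * Bᵀ) * A := by noncomm_ring
      _ = A * (A⁻¹ * A⁻¹) * A := by rw [hconj]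
      _ = (A * A⁻¹) * (A⁻¹ * A) := by noncomm_ring
      _ = 1 := by rw [hAAinv, hAinvA, one_mul]
  · rw [Matrix.mul_assoc, hAinvA, Matrix.mul_one]
end

section
/- In the group G = ⟨y₁, y₂, y₃ | (y_j y_i⁻¹)³ = (y_k y_l⁻¹)³ for all choices with neither side trivial; y_i y_j⁻¹ y_i = y_j⁻¹ y_i y_j⁻¹ for i ≠ j; y_k y_j⁻¹ y_i y_j⁻¹ y_k = y_j⁻¹ y_i y_j⁻¹ for i, j, k distinct⟩, the element τ = (y_i y_j⁻¹)³ (for any i ≠ j) is central and satisfies τ² = 1. -/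
namespace Stmt18

/-- Relators for the symmetric presentation of `π₁(C(K₄))` on generators
`y₁, y₂, y₃` (encoded as `0, 1, 2 : Fin 3`):
(i)   `(y_j y_i⁻¹)³ = (y_k y_l⁻¹)³` whenever `i ≠ j` and `k ≠ l`;
(ii)  `y_i y_j⁻¹ y_i = y_j⁻¹ y_i y_j⁻¹` for `i ≠ j`;
(iii) `y_k y_j⁻¹ y_i y_j⁻¹ y_k = y_j⁻¹ y_i y_j⁻¹` for `i, j, k` distinct. -/
def rels : Set (FreeGroup (Fin 3)) :=
  let y : Fin 3 → FreeGroup (Fin 3) := FreeGroup.of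
  {r | ∃ i j k l : Fin 3, i ≠ j ∧ k ≠ l ∧
        r = (y j * (y i)⁻¹) ^ 3 * ((y k * (y l)⁻¹) ^ 3)⁻¹} ∪
  {r | ∃ i j : Fin 3, i ≠ j ∧
        r = y i * (y j)⁻¹ * y i * ((y j)⁻¹ * y i * (y j)⁻¹)⁻¹} ∪
  {r | ∃ i j k : Fin 3, i ≠ j ∧ j ≠ k ∧ i ≠ k ∧
        r = y k * (y j)⁻¹ * y i * (y j)⁻¹ * y k *
              ((y j)⁻¹ * y i * (y j)⁻¹)⁻¹}

/-- The symmetric presentation of `π₁(C(K₄))`. -/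
abbrev G := PresentedGroup rels

/-- The generators of `G`. -/
def y (i : Fin 3) : G := PresentedGroup.of i

lemma mk_eq_one {r : FreeGroup (Fin 3)} (hr : r ∈ rels) :
    PresentedGroup.mk rels r = 1 :=
  (QuotientGroup.eq_one_iff r).mpr (Subgroup.subset_normalClosure hr)

lemma rel_eq {u v : FreeGroup (Fin 3)} (h : u * v⁻¹ ∈ rels) :
    PresentedGroup.mk rels u = PresentedGroup.mk rels v := by
  have := mk_eq_one h
  rw [map_mul, map_inv, mul_inv_eq_one] at this
  exact this

lemma y_def (i : Fin 3) : y i = PresentedGroup.mk rels (FreeGroup.of i) := rfl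

lemma rel1 (i j k l : Fin 3) (hij : i ≠ j) (hkl : k ≠ l) :
    (y j * (y i)⁻¹) ^ 3 = (y k * (y l)⁻¹) ^ 3 := by
  have h := rel_eq (u := (FreeGroup.of j * (FreeGroup.of i)⁻¹) ^ 3)
    (v := (FreeGroup.of k * (FreeGroup.of l)⁻¹) ^ 3)
    (Or.inl (Or.inl ⟨i, j, k, l, hij, hkl, rfl⟩))
  simpa [y_def, map_mul, map_inv, map_pow] using h

lemma rel2 (i j : Fin 3) (hij : i ≠ j) :
    y i * (y j)⁻¹ * y i = (y j)⁻¹ * y i * (y j)⁻¹ := by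
  have h := rel_eq (u := FreeGroup.of i * (FreeGroup.of j)⁻¹ * FreeGroup.of i)
    (v := (FreeGroup.of j)⁻¹ * FreeGroup.of i * (FreeGroup.of j)⁻¹)
    (Or.inl (Or.inr ⟨i, j, hij, rfl⟩))
  simpa [y_def, map_mul, map_inv] using h

lemma rel3 (i j k : Fin 3) (hij : i ≠ j) (hjk : j ≠ k) (hik : i ≠ k) :
    y k * (y j)⁻¹ * y i * (y j)⁻¹ * y k = (y j)⁻¹ * y i * (y j)⁻¹ := by
  have h := rel_eq
    (u := FreeGroup.of k * (FreeGroup.of j)⁻¹ * FreeGroup.of i * (FreeGroup.of j)⁻¹ *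
      FreeGroup.of k)
    (v := (FreeGroup.of j)⁻¹ * FreeGroup.of i * (FreeGroup.of j)⁻¹)
    (Or.inr ⟨i, j, k, hij, hjk, hik, rfl⟩)
  simpa [y_def, map_mul, map_inv] using h

/-- In any group, if `c * m * c = m` then `c` commutes with `m ^ 2`. -/
lemma aux_sq_comm {H : Type*} [Group H] (m c : H) (h : c * m * c = m) :
    Commute (m ^ 2) c := by
  have h1 : c * m = m * c⁻¹ := eq_mul_inv_of_mul_eq h
  have h2 : m * c = c⁻¹ * m := by
    refine eq_inv_mul_of_mul_eq ?_
    rw [← mul_assoc]; exact h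
  show m ^ 2 * c = c * m ^ 2
  calc m ^ 2 * c = m * (m * c) := by rw [pow_two, mul_assoc]
    _ = m * (c⁻¹ * m) := by rw [h2]
    _ = (m * c⁻¹) * m := by rw [mul_assoc]
    _ = (c * m) * m := by rw [← h1]
    _ = c * m ^ 2 := by rw [pow_two, mul_assoc]

/-- `τ = (y_i y_j⁻¹)³` equals `(y_j⁻¹ y_i y_j⁻¹)²`. -/
lemma tau_eq_sq (i j : Fin 3) (hij : i ≠ j) :
    (y i * (y j)⁻¹) ^ 3 = ((y j)⁻¹ * y i * (y j)⁻¹) ^ 2 := by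
  have h2 := rel2 i j hij
  rw [show (y i * (y j)⁻¹) ^ 3 = (y i * (y j)⁻¹ * y i) * ((y j)⁻¹ * y i * (y j)⁻¹) by
      simp [pow_succ, mul_assoc], h2, pow_two]

/-- `τ` commutes with `y i`. -/
lemma tau_comm_yi (i j : Fin 3) (hij : i ≠ j) :
    Commute ((y i * (y j)⁻¹) ^ 3) (y i) := by
  set a := y i
  set b := y j
  have h2 : a * b⁻¹ * a = b⁻¹ * a * b⁻¹ := rel2 i j hij
  have s1 : (a * b⁻¹) ^ 3 * a = (b⁻¹ * a * b⁻¹) * b⁻¹ * (b⁻¹ * a * b⁻¹) := by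
    rw [show (a * b⁻¹) ^ 3 * a = (a * b⁻¹ * a) * b⁻¹ * (a * b⁻¹ * a) by
      simp [pow_succ, mul_assoc], h2]
  have s2 : a * (a * b⁻¹) ^ 3 = (b⁻¹ * a * b⁻¹) * b⁻¹ * (b⁻¹ * a * b⁻¹) := by
    rw [show a * (a * b⁻¹) ^ 3 = a * (a * b⁻¹ * a) * (b⁻¹ * a * b⁻¹) by
        simp [pow_succ, mul_assoc], h2,
      show a * (b⁻¹ * a * b⁻¹) * (b⁻¹ * a * b⁻¹)
        = (a * b⁻¹ * a) * b⁻¹ * (b⁻¹ * a * b⁻¹) by simp [mul_assoc], h2]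
  show (a * b⁻¹) ^ 3 * a = a * (a * b⁻¹) ^ 3
  rw [s1, s2]


/-- the element `τ = (y_i y_j⁻¹)³` (for any `i ≠ j`) is central
in `G` and satisfies `τ² = 1`. -/
theorem tau_central_and_involutive :
    ∀ i j : Fin 3, i ≠ j →
      (∀ g : G, (y i * (y j)⁻¹) ^ 3 * g = g * (y i * (y j)⁻¹) ^ 3) ∧
      ((y i * (y j)⁻¹) ^ 3) ^ 2 = 1 := by
  intro i j hij
  constructor
  · -- centrality
    have hgen : ∀ x : Fin 3, Commute ((y i * (y j)⁻¹) ^ 3) (y x) := by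
      intro x
      by_cases hxi : x = i
      · subst hxi; exact tau_comm_yi x j hij
      by_cases hxj : x = j
      · subst hxj
        have e : (y i * (y x)⁻¹) ^ 3 = (y x * (y i)⁻¹) ^ 3 :=
          rel1 x i x i (Ne.symm hij) (Ne.symm hij)
        rw [e]
        exact tau_comm_yi x i (Ne.symm hij)
      · -- x is the third generator; use rel3
        have h3 := rel3 i j x hij (fun h => hxj h.symm) (fun h => hxi h.symm)
        rw [tau_eq_sq i j hij]
        refine aux_sq_comm _ _ ?_
        rw [show y x * ((y j)⁻¹ * y i * (y j)⁻¹) * y x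
            = y x * (y j)⁻¹ * y i * (y j)⁻¹ * y x by simp [mul_assoc], h3]
    have key : ∀ z : FreeGroup (Fin 3),
        Commute ((y i * (y j)⁻¹) ^ 3) (PresentedGroup.mk rels z) := by
      intro z
      induction z using FreeGroup.induction_on with
      | C1 => rw [map_one]; exact Commute.one_right _
      | of x => exact hgen x
      | inv_of x hx => rw [map_inv]; exact hx.inv_right
      | mul u v hu hv => rw [map_mul]; exact hu.mul_right hv
    intro g
    obtain ⟨z, rfl⟩ := PresentedGroup.mk_surjective rels g
    exact key z
  · -- involutive
    have e : (y i * (y j)⁻¹) ^ 3 = (y j * (y i)⁻¹) ^ 3 :=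
      rel1 j i j i (Ne.symm hij) (Ne.symm hij)
    rw [pow_two]
    nth_rewrite 2 [e]
    rw [show y j * (y i)⁻¹ = (y i * (y j)⁻¹)⁻¹ by rw [mul_inv_rev, inv_inv],
      inv_pow, mul_inv_cancel]

end Stmt18
end

section
/- A homomorphism from S_{n+1} to the hyperoctahedral group ℤ₂ ≀ S_n whose image surjects onto the S_n quotient must be injective when n > 3; consequently, since |S_{n+1}| = (n+1)! must then divide |ℤ₂ ≀ S_n| = 2ⁿ·n!, such a homomorphism can exist only if n+1 divides 2ⁿ, i.e., only if n = 2^k − 1 for some k. -/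
namespace Stmt19

/-- The action of `S_n` on `(ℤ₂)ⁿ` by permuting coordinates, as a homomorphism
into the automorphism group of `(ℤ₂)ⁿ` (written multiplicatively). -/
def permAction (n : ℕ) :
    Equiv.Perm (Fin n) →* MulAut (Multiplicative (Fin n → ZMod 2)) :=
  MonoidHom.mk'
    (fun σ => AddEquiv.toMultiplicative
      ((RingEquiv.piCongrLeft' (fun _ : Fin n => ZMod 2) σ).toAddEquiv))
    (fun σ τ => by ext f; rfl)

/-- The hyperoctahedral group `ℤ₂ ≀ S_n`, realized as the semidirect product
`(ℤ₂)ⁿ ⋊ S_n` for the coordinate-permutation action. -/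
abbrev Hyperoctahedral (n : ℕ) :=
  SemidirectProduct (Multiplicative (Fin n → ZMod 2)) (Equiv.Perm (Fin n))
    (permAction n)

private lemma exists_ne4 (m : ℕ) (hm : 5 ≤ m) (x y z w : Fin m) :
    ∃ v, v ≠ x ∧ v ≠ y ∧ v ≠ z ∧ v ≠ w := by
  have h4 : ({x, y, z, w} : Finset (Fin m)).card ≤ 4 := by
    apply le_trans (Finset.card_insert_le _ _)
    apply Nat.succ_le_succ
    apply le_trans (Finset.card_insert_le _ _)
    apply Nat.succ_le_succ
    exact le_trans (Finset.card_insert_le _ _) (by simp)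
  have hpos : 0 < ({x, y, z, w} : Finset (Fin m))ᶜ.card := by
    rw [Finset.card_compl]; simp; omega
  obtain ⟨v, hv⟩ := Finset.card_pos.mp hpos
  simp [Finset.mem_compl] at hv
  exact ⟨v, hv.1, hv.2.1, hv.2.2.1, hv.2.2.2⟩

/-- A normal subgroup of `S_m` (`m ≥ 5`) of order dividing `m` is trivial. -/
private lemma normal_small (m : ℕ) (hm : 5 ≤ m)
    (K : Subgroup (Equiv.Perm (Fin m))) (hnorm : K.Normal)
    (hcard : Nat.card K ∣ m) : K = ⊥ := by
  classical
  by_contra hK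
  obtain ⟨σ', hσ1'⟩ := Subgroup.ne_bot_iff_exists_ne_one.mp hK
  set σ : Equiv.Perm (Fin m) := (σ' : Equiv.Perm (Fin m)) with hσdef
  have hσK : σ ∈ K := σ'.2
  have hσ1 : σ ≠ 1 := fun h => hσ1' (Subtype.ext h)
  obtain ⟨a, ha⟩ : ∃ a, σ a ≠ a := by
    by_contra h; push_neg at h
    exact hσ1 (Equiv.ext fun x => h x)
  set b := σ a with hb
  have hba : b ≠ a := ha
  set uu : Fin m → Equiv.Perm (Fin m) :=
    fun c => if c = a then 1 else (Equiv.swap b c) * σ * (Equiv.swap b c) with huu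
  have huK : ∀ c, uu c ∈ K := by
    intro c
    by_cases h : c = a
    · simp [huu, h, K.one_mem]
    · simp only [huu, if_neg h]
      have : (Equiv.swap b c) * σ * (Equiv.swap b c) =
          (Equiv.swap b c) * σ * (Equiv.swap b c)⁻¹ := by
        rw [Equiv.swap_inv]
      rw [this]
      exact hnorm.conj_mem σ hσK _
  have hua : ∀ c, uu c a = c := by
    intro c
    by_cases h : c = a
    · simp [huu, h]
    · simp only [huu, if_neg h, Equiv.Perm.mul_apply]
      rw [Equiv.swap_apply_of_ne_of_ne (Ne.symm hba) (Ne.symm h), ← hb,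
        Equiv.swap_apply_left]
  have uuinj : ∀ c d, uu c = uu d → c = d := by
    intro c d h
    rw [← hua c, ← hua d, h]
  set u' : Fin m → K := fun c => ⟨uu c, huK c⟩ with hu'
  have hinj : Function.Injective u' := by
    intro c d h
    exact uuinj c d (congrArg Subtype.val h)
  have hcard' : Nat.card K = m := by
    have h1 : m ≤ Nat.card K := by
      have := Nat.card_le_card_of_injective u' hinj
      simpa using this
    have h2 : Nat.card K ≤ m := Nat.le_of_dvd (by omega) hcard
    omega
  have hbij : Function.Bijective u' :=
    (Nat.bijective_iff_injective_and_card u').mpr ⟨hinj, by rw [hcard']; simp⟩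
  have U : ∀ ρ : Equiv.Perm (Fin m), ρ ∈ K → ρ = uu (ρ a) := by
    intro ρ hρ
    obtain ⟨c, hc⟩ := hbij.2 ⟨ρ, hρ⟩
    have hv : uu c = ρ := congrArg Subtype.val hc
    have hρa : ρ a = c := by rw [← hv, hua]
    rw [hρa, hv]
  have conj : ∀ g : Equiv.Perm (Fin m), g a = a → ∀ c,
      g * uu c * g⁻¹ = uu (g c) := by
    intro g hg c
    have hmem : g * uu c * g⁻¹ ∈ K := hnorm.conj_mem _ (huK c) g
    have hU := U _ hmem
    have hga : g⁻¹ a = a := by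
      conv_lhs => rw [← hg]
      simp
    have harg : (g * uu c * g⁻¹) a = g c := by
      simp [Equiv.Perm.mul_apply, hga, hua]
    rwa [harg] at hU
  -- every `uu c` is an involution
  have invol : ∀ c, (uu c)⁻¹ = uu c := by
    intro c
    by_cases hc : c = a
    · simp [huu, hc]
    set c' := (uu c)⁻¹ a with hc'def
    have hU : (uu c)⁻¹ = uu c' := U _ (K.inv_mem (huK c))
    by_cases hcc : c' = c
    · rw [hU, hcc]
    have hc'a : c' ≠ a := by
      intro h
      rw [h] at hU
      have h1 : uu c = 1 := by
        have : (uu c)⁻¹ = 1 := by rw [hU]; simp [huu]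
        simpa using congrArg Inv.inv this
      have := hua c
      rw [h1] at this
      exact hc this.symm
    obtain ⟨e, hea, hec, hec', -⟩ := exists_ne4 m hm a c c' c'
    have hg_a : Equiv.swap c' e a = a :=
      Equiv.swap_apply_of_ne_of_ne (Ne.symm hc'a) (Ne.symm hea)
    have hg_c : Equiv.swap c' e c = c :=
      Equiv.swap_apply_of_ne_of_ne (fun h => hcc h.symm) (Ne.symm hec)
    have h1 : Equiv.swap c' e * uu c * (Equiv.swap c' e)⁻¹ = uu c := by
      rw [conj _ hg_a c, hg_c]
    have h2 : Equiv.swap c' e * (uu c)⁻¹ * (Equiv.swap c' e)⁻¹ = (uu c)⁻¹ := by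
      have := congrArg Inv.inv h1
      rw [mul_inv_rev, mul_inv_rev] at this
      simpa [mul_assoc] using this
    have h3 : Equiv.swap c' e * (uu c)⁻¹ * (Equiv.swap c' e)⁻¹ = uu e := by
      rw [hU, conj _ hg_a c', Equiv.swap_apply_left]
    exact absurd (uuinj _ _ (by rw [← hU, ← h2, h3])) (Ne.symm hec')
  -- main contradiction
  obtain ⟨c0, hc0a, hc0b, -, -⟩ := exists_ne4 m hm a b b b
  set p := uu b * uu c0 with hp
  have hpK : p ∈ K := K.mul_mem (huK b) (huK c0)
  set d := uu b c0 with hd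
  have hpa : p a = d := by
    simp [hp, Equiv.Perm.mul_apply, hua, hd]
  have hpd : p = uu d := by
    have := U p hpK
    rwa [hpa] at this
  have hda : d ≠ a := by
    intro h
    have hp1 : p = 1 := by rw [hpd, h]; simp [huu]
    have : uu b = (uu c0)⁻¹ := eq_inv_of_mul_eq_one_left hp1
    rw [invol] at this
    exact hc0b (uuinj _ _ this).symm
  have hdb : d ≠ b := by
    intro h
    have : uu b c0 = uu b a := by rw [← hd, h, hua]
    exact hc0a ((uu b).injective this)
  have hdc : d ≠ c0 := by
    intro h
    have h1 : uu b * uu c0 = uu c0 := by rw [← hp, hpd, h]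
    have h2 : uu b = 1 := by
      have := mul_right_cancel (h1.trans (one_mul (uu c0)).symm)
      exact this
    have := hua b
    rw [h2] at this
    exact hba this.symm
  obtain ⟨e, hea, heb, hec0, hed⟩ := exists_ne4 m hm a b c0 d
  have hg_a : Equiv.swap d e a = a :=
    Equiv.swap_apply_of_ne_of_ne (Ne.symm hda) (Ne.symm hea)
  have hg_b : Equiv.swap d e b = b :=
    Equiv.swap_apply_of_ne_of_ne (Ne.symm hdb) (Ne.symm heb)
  have hg_c0 : Equiv.swap d e c0 = c0 :=
    Equiv.swap_apply_of_ne_of_ne (Ne.symm hdc) (Ne.symm hec0)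
  have h1 : Equiv.swap d e * p * (Equiv.swap d e)⁻¹ = p := by
    have hsplit : Equiv.swap d e * p * (Equiv.swap d e)⁻¹ =
        (Equiv.swap d e * uu b * (Equiv.swap d e)⁻¹) *
        (Equiv.swap d e * uu c0 * (Equiv.swap d e)⁻¹) := by
      rw [hp]; group
    rw [hsplit, conj _ hg_a b, conj _ hg_a c0, hg_b, hg_c0]
  have h2 : Equiv.swap d e * p * (Equiv.swap d e)⁻¹ = uu e := by
    rw [hpd, conj _ hg_a d, Equiv.swap_apply_left]
  have : d = e := uuinj _ _ (by rw [← hpd, ← h1, h2])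
  exact (Ne.symm hed) this

/-- for `n > 3`, any homomorphism `S_{n+1} → ℤ₂ ≀ S_n` whose
image surjects onto the quotient `S_n` is injective; consequently such a
homomorphism can exist only if `n = 2^k - 1` for some `k`. -/
theorem symm_to_hyperoctahedral (n : ℕ) (hn : 3 < n) :
    (∀ φ : Equiv.Perm (Fin (n + 1)) →* Hyperoctahedral n,
      Function.Surjective (SemidirectProduct.rightHom.comp φ) →
      Function.Injective φ) ∧
    ((∃ φ : Equiv.Perm (Fin (n + 1)) →* Hyperoctahedral n,
        Function.Surjective (SemidirectProduct.rightHom.comp φ)) →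
      ∃ k : ℕ, n = 2 ^ k - 1) := by
  have h1 : ∀ φ : Equiv.Perm (Fin (n + 1)) →* Hyperoctahedral n,
      Function.Surjective (SemidirectProduct.rightHom.comp φ) →
      Function.Injective φ := by
    intro φ hsurj
    set ψ := SemidirectProduct.rightHom.comp φ with hψ
    rw [← φ.ker_eq_bot_iff]
    have hle : φ.ker ≤ ψ.ker := by
      intro x hx
      rw [MonoidHom.mem_ker] at hx ⊢
      rw [hψ, MonoidHom.comp_apply, hx, map_one]
    have htot : Nat.card (Equiv.Perm (Fin (n + 1))) = (n + 1).factorial := by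
      simp [Nat.card_eq_fintype_card, Fintype.card_perm]
    have hq : Nat.card (Equiv.Perm (Fin (n + 1)) ⧸ ψ.ker) = n.factorial := by
      rw [Nat.card_congr (QuotientGroup.quotientKerEquivOfSurjective ψ hsurj).toEquiv]
      simp [Nat.card_eq_fintype_card, Fintype.card_perm]
    have heq := Subgroup.card_eq_card_quotient_mul_card_subgroup ψ.ker
    rw [htot, hq, Nat.factorial_succ] at heq
    have hker_card : Nat.card ψ.ker = n + 1 :=
      (Nat.eq_of_mul_eq_mul_left (Nat.factorial_pos n)
        (by rw [mul_comm (n + 1) n.factorial] at heq; exact heq.symm))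
    have hdvd : Nat.card φ.ker ∣ n + 1 := by
      exact dvd_trans (Subgroup.card_dvd_of_le hle) hker_card.dvd
    exact normal_small (n + 1) (by omega) φ.ker (MonoidHom.normal_ker φ) hdvd
  refine ⟨h1, ?_⟩
  rintro ⟨φ, hsurj⟩
  have hinj := h1 φ hsurj
  have htot : Nat.card (Equiv.Perm (Fin (n + 1))) = (n + 1).factorial := by
    simp [Nat.card_eq_fintype_card, Fintype.card_perm]
  have hH : Nat.card (Hyperoctahedral n) = 2 ^ n * n.factorial := by
    have e : Hyperoctahedral n ≃
        (Multiplicative (Fin n → ZMod 2)) × Equiv.Perm (Fin n) :=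
      ⟨fun x => (x.left, x.right), fun p => ⟨p.1, p.2⟩,
        fun x => rfl, fun p => rfl⟩
    rw [Nat.card_congr e, Nat.card_prod,
      Nat.card_congr (Multiplicative.toAdd (α := Fin n → ZMod 2))]
    simp [Nat.card_eq_fintype_card, Fintype.card_perm, Fintype.card_fun]
  have hdvd : (n + 1).factorial ∣ Nat.card (Hyperoctahedral n) := by
    have hce : Nat.card (Equiv.Perm (Fin (n + 1))) = Nat.card φ.range :=
      Nat.card_congr (MonoidHom.ofInjective hinj).toEquiv
    rw [← htot, hce]
    exact Subgroup.card_subgroup_dvd_card φ.range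
  rw [hH, Nat.factorial_succ] at hdvd
  have hdvd2 : n + 1 ∣ 2 ^ n := by
    rw [mul_comm (n + 1) n.factorial, mul_comm (2 ^ n) n.factorial] at hdvd
    exact (mul_dvd_mul_iff_left (a := n.factorial) (by positivity)).mp hdvd
  obtain ⟨k, -, hk⟩ := (Nat.dvd_prime_pow Nat.prime_two).mp hdvd2
  exact ⟨k, by omega⟩

end Stmt19
end
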